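/- For every real number α > 0 there exists a constant C > 0 such that for every real number p ≥ 1 and every natural number n with n > 2α, one has (n/p)! / ((n−α)/p)! ≤ C · n^{α/p}. -/

import Mathlib

lemma gamma_interp {x t : ℝ} (hx : 0 < x) (ht0 : 0 ≤ t) (ht1 : t ≤ 1) :
    Real.Gamma (x + t) ≤ Real.Gamma x * x ^ t := by
  have hx1 : (0:ℝ) < x + 1 := by linarith
  have h := Real.convexOn_log_Gamma.2 (Set.mem_Ioi.2 hx) (Set.mem_Ioi.2 hx1)
    (by linarith : (0:ℝ) ≤ 1 - t) ht0 (by ring)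
  have hxt : 0 < x + t := by linarith
  have hg1 : 0 < Real.Gamma x := Real.Gamma_pos_of_pos hx
  have hg2 : 0 < Real.Gamma (x + t) := Real.Gamma_pos_of_pos hxt
  have hcomb : (1 - t) • x + t • (x + 1) = x + t := by simp [smul_eq_mul]; ring
  rw [hcomb] at h
  simp only [Function.comp_apply, smul_eq_mul] at h
  have hGadd : Real.Gamma (x + 1) = x * Real.Gamma x := Real.Gamma_add_one hx.ne'
  rw [hGadd, Real.log_mul hx.ne' hg1.ne'] at h
  have hrhs : (1 - t) * Real.log (Real.Gamma x) + t * (Real.log x + Real.log (Real.Gamma x))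
      = Real.log (Real.Gamma x * x ^ t) := by
    rw [Real.log_mul hg1.ne' (Real.rpow_pos_of_pos hx t).ne', Real.log_rpow hx]
    ring
  rw [hrhs] at h
  have hpos : 0 < Real.Gamma x * x ^ t := mul_pos hg1 (Real.rpow_pos_of_pos hx t)
  exact (Real.log_le_log_iff hg2 hpos).1 h

lemma gamma_ratio_le (B : ℝ) (hB : 1 ≤ B) :
    ∀ k : ℕ, ∀ x t : ℝ, 0 < x → 0 ≤ t → t ≤ k → x + t ≤ B →
      Real.Gamma (x + t) ≤ Real.Gamma x * B ^ t := by
  have hB0 : (0:ℝ) < B := by linarith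
  intro k
  induction k with
  | zero =>
    intro x t hx ht0 htk _
    have : t = 0 := le_antisymm (by exact_mod_cast htk) ht0
    simp [this]
  | succ k ih =>
    intro x t hx ht0 htk hxB
    by_cases h1 : t ≤ 1
    · calc Real.Gamma (x + t) ≤ Real.Gamma x * x ^ t := gamma_interp hx ht0 h1
        _ ≤ Real.Gamma x * B ^ t := by
            apply mul_le_mul_of_nonneg_left _ (Real.Gamma_pos_of_pos hx).le
            exact Real.rpow_le_rpow hx.le (by linarith) ht0
    · push_neg at h1
      have ht1 : 0 ≤ t - 1 := by linarith
      have htk' : t - 1 ≤ (k : ℝ) := by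
        have : t ≤ (k : ℝ) + 1 := by exact_mod_cast htk
        linarith
      have hxB' : x + (t - 1) ≤ B := by linarith
      have hrec : Real.Gamma (x + t) = (x + (t - 1)) * Real.Gamma (x + (t - 1)) := by
        have : x + t = (x + (t - 1)) + 1 := by ring
        rw [this, Real.Gamma_add_one (by positivity : x + (t-1) ≠ 0)]
      rw [hrec]
      have hih := ih x (t - 1) hx ht1 htk' hxB'
      calc (x + (t - 1)) * Real.Gamma (x + (t - 1))
          ≤ B * (Real.Gamma x * B ^ (t - 1)) := by
            apply mul_le_mul (by linarith) hih
              (Real.Gamma_pos_of_pos (by linarith)).le hB0.le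
        _ = Real.Gamma x * B ^ t := by
            rw [show t = (t - 1) + 1 by ring, Real.rpow_add hB0, Real.rpow_one]
            ring

/-- For every real `α > 0` there exists `C > 0` such that for every real `p ≥ 1` and
every natural number `n` with `n > 2α`, one has
`(n/p)! / ((n-α)/p)! ≤ C · n^(α/p)`, where `x! = Γ(x+1)`. -/
theorem stmt_0 :
    ∀ α : ℝ, 0 < α → ∃ C : ℝ, 0 < C ∧
      ∀ p : ℝ, 1 ≤ p → ∀ n : ℕ, 2 * α < (n : ℝ) →
        Real.Gamma ((n : ℝ) / p + 1) / Real.Gamma (((n : ℝ) - α) / p + 1) ≤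
          C * (n : ℝ) ^ (α / p) := by
  intro α hα
  refine ⟨(2:ℝ) ^ α, Real.rpow_pos_of_pos two_pos α, ?_⟩
  intro p hp n hn
  have hp0 : (0:ℝ) < p := by linarith
  have hn0 : (0:ℝ) < n := by linarith
  have hn1 : (1:ℝ) ≤ n := by exact_mod_cast Nat.one_le_iff_ne_zero.2 (by
    intro h; rw [h] at hn0; simp at hn0)
  set x : ℝ := ((n : ℝ) - α) / p + 1 with hxdef
  set t : ℝ := α / p with htdef
  have hx : 0 < x := by
    have : 0 ≤ ((n : ℝ) - α) / p := div_nonneg (by linarith) hp0.le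
    simp only [hxdef]; linarith
  have ht0 : 0 ≤ t := div_nonneg hα.le hp0.le
  have htα : t ≤ α := div_le_self hα.le hp
  have hxt : x + t = (n : ℝ) / p + 1 := by
    rw [hxdef, htdef]; ring
  have hxB : x + t ≤ 2 * n := by
    rw [hxt]
    have : (n : ℝ) / p ≤ n := div_le_self hn0.le hp
    linarith
  have hB1 : (1:ℝ) ≤ 2 * n := by linarith
  have hk : t ≤ (⌈α⌉₊ : ℝ) := htα.trans (Nat.le_ceil α)
  have hmain := gamma_ratio_le (2 * n) hB1 ⌈α⌉₊ x t hx ht0 hk hxB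
  rw [hxt] at hmain
  have hg : 0 < Real.Gamma x := Real.Gamma_pos_of_pos hx
  rw [div_le_iff₀ hg]
  calc Real.Gamma ((n : ℝ) / p + 1) ≤ Real.Gamma x * (2 * n) ^ t := hmain
    _ ≤ Real.Gamma x * ((2:ℝ) ^ α * (n : ℝ) ^ t) := by
        apply mul_le_mul_of_nonneg_left _ hg.le
        rw [Real.mul_rpow (by norm_num) hn0.le]
        apply mul_le_mul_of_nonneg_right _ (Real.rpow_nonneg hn0.le t)
        exact Real.rpow_le_rpow_of_exponent_le (by norm_num) htα
    _ = (2:ℝ) ^ α * (n : ℝ) ^ (α / p) * Real.Gamma x := by ring
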